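/- Let F be any quaternion-valued C¹ function of (α,β) on a region where sin β ≠ 0. Then ∂(ι·F)/∂ιₗ = 2F − ι·(∂F/∂ιₗ), where ι = ι(α,β). -/

import Mathlib

open Quaternion

noncomputable section

/-- `ι(α,β) = cos α sin β · i + sin α sin β · j + cos β · k`, a unit imaginary quaternion. -/
def iota (α β : ℝ) : ℍ[ℝ] :=
  ⟨0, Real.cos α * Real.sin β, Real.sin α * Real.sin β, Real.cos β⟩
/-- `ι_α = ∂ι/∂α`. -/
def iotaA (α β : ℝ) : ℍ[ℝ] := deriv (fun a => iota a β) α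
/-- `ι_β = ∂ι/∂β`. -/
def iotaB (α β : ℝ) : ℍ[ℝ] := deriv (fun b => iota α b) β

/-- Partial derivative in `α` of a quaternion-valued function of `(α,β)`. -/
def pA (g : ℝ → ℝ → ℍ[ℝ]) (α β : ℝ) : ℍ[ℝ] := deriv (fun a => g a β) α
/-- Partial derivative in `β` of a quaternion-valued function of `(α,β)`. -/
def pB (g : ℝ → ℝ → ℍ[ℝ]) (α β : ℝ) : ℍ[ℝ] := deriv (fun b => g α b) β
/-- The left angular derivative `∂g/∂ιₗ := ι_α⁻¹ (∂g/∂α) + ι_β⁻¹ (∂g/∂β)`. -/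
def DI (g : ℝ → ℝ → ℍ[ℝ]) (α β : ℝ) : ℍ[ℝ] :=
  (iotaA α β)⁻¹ * pA g α β + (iotaB α β)⁻¹ * pB g α β

def qi : ℍ[ℝ] := ⟨0,1,0,0⟩
def qj : ℍ[ℝ] := ⟨0,0,1,0⟩
def qk : ℍ[ℝ] := ⟨0,0,0,1⟩

lemma hasDerivAt_iota_a (α β : ℝ) :
    HasDerivAt (fun a => iota a β)
      ⟨0, -Real.sin α * Real.sin β, Real.cos α * Real.sin β, 0⟩ α := by
  have h : (fun a => iota a β) = fun a =>
      (Real.cos a * Real.sin β) • qi + (Real.sin a * Real.sin β) • qj +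
      (Real.cos β) • qk := by
    funext a; ext <;> simp [iota] <;> simp [qi, qj, qk]
  rw [h]
  have h1 := ((Real.hasDerivAt_cos α).mul_const (Real.sin β)).smul_const qi
  have h2 := ((Real.hasDerivAt_sin α).mul_const (Real.sin β)).smul_const qj
  have h3 := (h1.add h2).add_const ((Real.cos β) • qk)
  refine h3.congr_deriv ?_
  ext <;> simp <;> simp [qi, qj]

lemma hasDerivAt_iota_b (α β : ℝ) :
    HasDerivAt (fun b => iota α b)
      ⟨0, Real.cos α * Real.cos β, Real.sin α * Real.cos β, -Real.sin β⟩ β := by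
  have h : (fun b => iota α b) = fun b =>
      (Real.sin b) • ((Real.cos α) • qi + (Real.sin α) • qj) + (Real.cos b) • qk := by
    funext b; ext <;> simp [iota] <;> simp [qi, qj, qk] <;> ring
  rw [h]
  have h1 := (Real.hasDerivAt_sin β).smul_const ((Real.cos α) • qi + (Real.sin α) • qj)
  have h2 := (Real.hasDerivAt_cos β).smul_const qk
  refine (h1.add h2).congr_deriv ?_
  ext <;> simp <;> simp [qi, qj, qk] <;> ring

lemma iotaA_eq (α β : ℝ) :
    iotaA α β = ⟨0, -Real.sin α * Real.sin β, Real.cos α * Real.sin β, 0⟩ :=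
  (hasDerivAt_iota_a α β).deriv

lemma iotaB_eq (α β : ℝ) :
    iotaB α β = ⟨0, Real.cos α * Real.cos β, Real.sin α * Real.cos β, -Real.sin β⟩ :=
  (hasDerivAt_iota_b α β).deriv

lemma iotaA_ne (α β : ℝ) (h : Real.sin β ≠ 0) : iotaA α β ≠ 0 := by
  rw [iotaA_eq]
  intro hc
  have h1 : Real.cos α * Real.sin β = 0 := congrArg QuaternionAlgebra.imJ hc
  have h2 : -Real.sin α * Real.sin β = 0 := congrArg QuaternionAlgebra.imI hc
  have := Real.sin_sq_add_cos_sq α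
  rcases mul_eq_zero.1 h1 with hc1 | hc1
  · rcases mul_eq_zero.1 h2 with hc2 | hc2
    · nlinarith
    · exact h hc2
  · exact h hc1

lemma iotaB_ne (α β : ℝ) (h : Real.sin β ≠ 0) : iotaB α β ≠ 0 := by
  rw [iotaB_eq]
  intro hc
  have h1 : -Real.sin β = 0 := congrArg QuaternionAlgebra.imK hc
  exact h (by linarith)

lemma anticomm_a (α β : ℝ) : iota α β * iotaA α β = -(iotaA α β * iota α β) := by
  rw [iotaA_eq]; ext <;> simp only [iota] <;> erw [QuaternionAlgebra.mk_mul_mk,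
    QuaternionAlgebra.mk_mul_mk, QuaternionAlgebra.neg_mk] <;> simp <;> first | ring1 | linear_combination (-2*Real.sin β*Real.cos β) * Real.sin_sq_add_cos_sq α | linear_combination (2*Real.sin β*Real.cos β) * Real.sin_sq_add_cos_sq α

lemma anticomm_b (α β : ℝ) : iota α β * iotaB α β = -(iotaB α β * iota α β) := by
  rw [iotaB_eq]; ext <;> simp only [iota] <;> erw [QuaternionAlgebra.mk_mul_mk,
    QuaternionAlgebra.mk_mul_mk, QuaternionAlgebra.neg_mk] <;> simp <;> first | ring1 | linear_combination (-2*Real.sin β*Real.cos β) * Real.sin_sq_add_cos_sq α | linear_combination (2*Real.sin β*Real.cos β) * Real.sin_sq_add_cos_sq α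

lemma inv_anticomm {q p : ℍ[ℝ]} (hq : q ≠ 0) (h : p * q = -(q * p)) :
    q⁻¹ * p = -(p * q⁻¹) := by
  have e1 : q⁻¹ * (p * q) * q⁻¹ = q⁻¹ * p := by
    rw [mul_assoc q⁻¹ (p*q) q⁻¹, mul_assoc p q q⁻¹, mul_inv_cancel₀ hq, mul_one]
  have e2 : q⁻¹ * (-(q * p)) * q⁻¹ = -(p * q⁻¹) := by
    rw [mul_neg q⁻¹ (q*p), neg_mul, ← mul_assoc q⁻¹ q p, inv_mul_cancel₀ hq, one_mul]
  rw [← e1, h, e2]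

/-- For any quaternion-valued `C¹` function `F` of `(α,β)` on a region where
`sin β ≠ 0`, we have `∂(ι F)/∂ιₗ = 2F - ι (∂F/∂ιₗ)`. -/
theorem angular_deriv_iota_mul (S : Set (ℝ × ℝ)) (hS : IsOpen S)
    (hSsin : ∀ x ∈ S, Real.sin x.2 ≠ 0)
    (F : ℝ → ℝ → ℍ[ℝ])
    (hF : ContDiffOn ℝ 1 (fun x : ℝ × ℝ => F x.1 x.2) S) :
    ∀ x ∈ S,
      DI (fun a b => iota a b * F a b) x.1 x.2
        = (2 : ℍ[ℝ]) * F x.1 x.2 - iota x.1 x.2 * DI F x.1 x.2 := by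
  rintro ⟨α, β⟩ hx
  have hsin := hSsin _ hx
  have hdF : DifferentiableAt ℝ (fun x : ℝ × ℝ => F x.1 x.2) (α, β) :=
    ((hF.differentiableOn one_ne_zero).differentiableAt (hS.mem_nhds hx))
  have hFa : DifferentiableAt ℝ (fun a => F a β) α :=
    hdF.comp (f := fun a => (a, β)) α (differentiableAt_id.prodMk (differentiableAt_const β))
  have hFb : DifferentiableAt ℝ (fun b => F α b) β :=
    hdF.comp (f := fun b => (α, b)) β ((differentiableAt_const α).prodMk differentiableAt_id)
  have hA := hasDerivAt_iota_a α β
  have hB := hasDerivAt_iota_b α β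
  rw [← iotaA_eq] at hA
  rw [← iotaB_eq] at hB
  have hpA : pA (fun a b => iota a b * F a b) α β
      = iotaA α β * F α β + iota α β * pA F α β := by
    have := (hA.mul hFa.hasDerivAt).deriv
    simpa [pA, Pi.mul_def] using this
  have hpB : pB (fun a b => iota a b * F a b) α β
      = iotaB α β * F α β + iota α β * pB F α β := by
    have := (hB.mul hFb.hasDerivAt).deriv
    simpa [pB, Pi.mul_def] using this
  have hAne := iotaA_ne α β hsin
  have hBne := iotaB_ne α β hsin
  have hacA : (iotaA α β)⁻¹ * iota α β = -(iota α β * (iotaA α β)⁻¹) :=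
    inv_anticomm hAne (anticomm_a α β)
  have hacB : (iotaB α β)⁻¹ * iota α β = -(iota α β * (iotaB α β)⁻¹) :=
    inv_anticomm hBne (anticomm_b α β)
  simp only [DI, hpA, hpB, mul_add]
  rw [← mul_assoc, ← mul_assoc, ← mul_assoc, ← mul_assoc,
    inv_mul_cancel₀ hAne, inv_mul_cancel₀ hBne, hacA, hacB]
  simp only [one_mul, neg_mul, two_mul, mul_add]
  abel_nf
  noncomm_ring
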